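/- With D, g, D*, D^s as above, assume all a_{ji} ≠ 0, Tr D = Tr(D²) ≠ 0, and λ_i − λ_j = Tr D for every (i,j) ∈ 𝒜. Setting A_j^i = g_j a_{ji}² / (2 g_i Tr D) for (i,j) ∈ 𝒜, one has the identity of endomorphisms −Tr((D^s)²)·Id − ½[D,D*] + (Tr D)·D^s = (Tr D)·( −(1 + Σ_{(i,j)∈𝒜} A_j^i)·Id − Σ_{(i,j)∈𝒜} A_j^i ( e^j⊗e_j − e^i⊗e_i ) + Σ_i λ_i e^i⊗e_i ). -/

import Mathlib

/-- The endomorphism `e^i ⊗ e_j` of `ℝ^n`, sending the standard basis vector `e i`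
to `e j` and the other standard basis vectors to `0`. -/
noncomputable def elemEnd {n : ℕ} (i j : Fin n) : Module.End ℝ (Fin n → ℝ) :=
  (LinearMap.proj i : (Fin n → ℝ) →ₗ[ℝ] ℝ).smulRight (Pi.single j 1)

lemma elemEnd_apply' {n : ℕ} (i j : Fin n) (x : Fin n → ℝ) (m : Fin n) :
    elemEnd i j x m = if j = m then x i else 0 := by
  simp [elemEnd, Pi.single_apply, eq_comm]

lemma elemEnd_mul {n : ℕ} (i j k l : Fin n) :
    elemEnd i j * elemEnd k l = if i = l then elemEnd k j else 0 := by
  apply LinearMap.ext; intro x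
  funext m
  by_cases h : i = l <;>
    simp [Module.End.mul_apply, elemEnd_apply', h]
  exact fun _ hh => absurd hh.symm h

lemma trace_elemEnd {n : ℕ} (i j : Fin n) :
    LinearMap.trace ℝ (Fin n → ℝ) (elemEnd i j) = if i = j then 1 else 0 := by
  rw [LinearMap.trace_eq_matrix_trace ℝ (Pi.basisFun ℝ (Fin n))]
  simp [Matrix.trace, Matrix.diag, LinearMap.toMatrix_apply, elemEnd_apply', Pi.single_apply,
    eq_comm]

set_option maxHeartbeats 2000000 in
/-- Under the normalization `Tr D = Tr(D²) ≠ 0` and `λ i − λ j = Tr D` for `(i,j) ∈ 𝒜`,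
setting `A_j^i = g_j a_{ji}² / (2 g_i Tr D)`, the endomorphism
`−Tr((D^s)²)·Id − ½[D,D*] + (Tr D)·D^s` equals
`(Tr D)·(−(1 + Σ A_j^i)·Id − Σ A_j^i (e^j⊗e_j − e^i⊗e_i) + Σ λ_i e^i⊗e_i)`. -/
theorem diagonal_part_identity
    {n : ℕ} (hn : 1 ≤ n) (𝒜 : Finset (Fin n × Fin n))
    (hA₁ : ∀ p ∈ 𝒜, p.1 ≠ p.2)
    (hA₂ : ∀ p ∈ 𝒜, ∀ q ∈ 𝒜, p ≠ q →
      p.1 ≠ q.1 ∧ p.1 ≠ q.2 ∧ p.2 ≠ q.1 ∧ p.2 ≠ q.2)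
    (lam : Fin n → ℝ) (a : Fin n × Fin n → ℝ) (ha : ∀ p ∈ 𝒜, a p ≠ 0)
    (D : Module.End ℝ (Fin n → ℝ))
    (hD : D = (∑ i, lam i • elemEnd i i) + ∑ p ∈ 𝒜, a p • elemEnd p.1 p.2)
    (htr : LinearMap.trace ℝ (Fin n → ℝ) D = LinearMap.trace ℝ (Fin n → ℝ) (D ^ 2))
    (htr0 : LinearMap.trace ℝ (Fin n → ℝ) D ≠ 0)
    (hlam : ∀ p ∈ 𝒜, lam p.1 - lam p.2 = LinearMap.trace ℝ (Fin n → ℝ) D)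
    (gv : Fin n → ℝ) (hg : ∀ i, gv i ≠ 0)
    (Dstar : Module.End ℝ (Fin n → ℝ))
    (hadj : ∀ x y : Fin n → ℝ,
      (∑ i, gv i * (D x) i * y i) = ∑ i, gv i * x i * (Dstar y) i)
    (Ds : Module.End ℝ (Fin n → ℝ)) (hDs : Ds = (1 / 2 : ℝ) • (D + Dstar))
    (A : Fin n × Fin n → ℝ)
    (hA : ∀ p ∈ 𝒜, A p = gv p.2 * a p ^ 2 /
      (2 * gv p.1 * LinearMap.trace ℝ (Fin n → ℝ) D)) :
    (-(LinearMap.trace ℝ (Fin n → ℝ) (Ds ^ 2))) • (1 : Module.End ℝ (Fin n → ℝ)) +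
        (-(1 / 2 : ℝ)) • (D * Dstar - Dstar * D) +
        LinearMap.trace ℝ (Fin n → ℝ) D • Ds =
      LinearMap.trace ℝ (Fin n → ℝ) D •
        ((-(1 + ∑ p ∈ 𝒜, A p)) • (1 : Module.End ℝ (Fin n → ℝ)) -
          (∑ p ∈ 𝒜, A p • (elemEnd p.2 p.2 - elemEnd p.1 p.1)) +
          ∑ i, lam i • elemEnd i i) := by
  classical
  set T := LinearMap.trace ℝ (Fin n → ℝ) D with hT
  -- the explicit form of the adjoint
  have hDst : Dstar = (∑ i, lam i • elemEnd i i)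
      + ∑ p ∈ 𝒜, (a p * gv p.2 / gv p.1) • elemEnd p.2 p.1 := by
    apply LinearMap.ext; intro y
    funext k
    have h := hadj (Pi.single k 1) y
    rw [hD] at h
    simp only [LinearMap.add_apply, LinearMap.coe_sum, Finset.sum_apply,
      LinearMap.smul_apply, Pi.smul_apply, smul_eq_mul, elemEnd_apply',
      Pi.single_apply, Pi.add_apply] at h
    simp only [mul_ite, ite_mul, mul_zero, zero_mul, mul_one, one_mul, mul_add, add_mul,
      Finset.sum_add_distrib, Finset.mul_sum, Finset.sum_mul, Finset.sum_ite_eq',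
      Finset.sum_ite_eq, Finset.mem_univ, if_true] at h
    rw [Finset.sum_comm] at h
    simp only [Finset.sum_ite_eq, Finset.mem_univ, if_true] at h
    simp only [LinearMap.add_apply, LinearMap.coe_sum, Finset.sum_apply,
      LinearMap.smul_apply, Pi.smul_apply, smul_eq_mul, elemEnd_apply', Pi.add_apply,
      mul_ite, mul_zero, Finset.sum_ite_eq', Finset.mem_univ, if_true]
    apply mul_left_cancel₀ (hg k)
    rw [← h, mul_add, Finset.mul_sum]
    congr 1
    · ring
    refine Finset.sum_congr rfl fun p hp => ?_
    by_cases hpk : p.1 = k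
    · rw [if_pos hpk, if_pos hpk, ← hpk]
      field_simp
      rw [mul_div_cancel_right₀ _ (hg p.1)]
    · rw [if_neg hpk, if_neg hpk, mul_zero]
  set L := ∑ i, lam i • elemEnd i i with hL
  set N := ∑ p ∈ 𝒜, a p • elemEnd p.1 p.2 with hN
  set N' := ∑ p ∈ 𝒜, (a p * gv p.2 / gv p.1) • elemEnd p.2 p.1 with hN'
  -- products
  have hLL : L * L = ∑ i, (lam i * lam i) • elemEnd i i := by
    rw [hL, Finset.sum_mul_sum]
    refine Finset.sum_congr rfl fun i _ => ?_
    rw [Finset.sum_eq_single i (fun j _ hj => ?_) (fun h => absurd (Finset.mem_univ _) h)]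
    · rw [smul_mul_smul_comm, elemEnd_mul, if_pos rfl]
    · rw [smul_mul_smul_comm, elemEnd_mul, if_neg (fun h => hj h.symm), smul_zero]
  have hLN : L * N = ∑ p ∈ 𝒜, (lam p.2 * a p) • elemEnd p.1 p.2 := by
    rw [hL, hN, Finset.sum_mul_sum, Finset.sum_comm]
    refine Finset.sum_congr rfl fun p _ => ?_
    rw [Finset.sum_eq_single p.2 (fun i _ hi => ?_) (fun h => absurd (Finset.mem_univ _) h)]
    · rw [smul_mul_smul_comm, elemEnd_mul, if_pos rfl]
    · rw [smul_mul_smul_comm, elemEnd_mul, if_neg hi, smul_zero]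
  have hNL : N * L = ∑ p ∈ 𝒜, (a p * lam p.1) • elemEnd p.1 p.2 := by
    rw [hL, hN, Finset.sum_mul_sum]
    refine Finset.sum_congr rfl fun p _ => ?_
    rw [Finset.sum_eq_single p.1 (fun j _ hj => ?_) (fun h => absurd (Finset.mem_univ _) h)]
    · rw [smul_mul_smul_comm, elemEnd_mul, if_pos rfl]
    · rw [smul_mul_smul_comm, elemEnd_mul, if_neg (fun h => hj h.symm), smul_zero]
  have hLN' : L * N' = ∑ p ∈ 𝒜, (lam p.1 * (a p * gv p.2 / gv p.1)) • elemEnd p.2 p.1 := by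
    rw [hL, hN', Finset.sum_mul_sum, Finset.sum_comm]
    refine Finset.sum_congr rfl fun p _ => ?_
    rw [Finset.sum_eq_single p.1 (fun i _ hi => ?_) (fun h => absurd (Finset.mem_univ _) h)]
    · rw [smul_mul_smul_comm, elemEnd_mul, if_pos rfl]
    · rw [smul_mul_smul_comm, elemEnd_mul, if_neg hi, smul_zero]
  have hN'L : N' * L = ∑ p ∈ 𝒜, ((a p * gv p.2 / gv p.1) * lam p.2) • elemEnd p.2 p.1 := by
    rw [hL, hN', Finset.sum_mul_sum]
    refine Finset.sum_congr rfl fun p _ => ?_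
    rw [Finset.sum_eq_single p.2 (fun j _ hj => ?_) (fun h => absurd (Finset.mem_univ _) h)]
    · rw [smul_mul_smul_comm, elemEnd_mul, if_pos rfl]
    · rw [smul_mul_smul_comm, elemEnd_mul, if_neg (fun h => hj h.symm), smul_zero]
  have hNN : N * N = 0 := by
    rw [hN, Finset.sum_mul_sum]
    refine Finset.sum_eq_zero fun p hp => Finset.sum_eq_zero fun q hq => ?_
    rw [smul_mul_smul_comm, elemEnd_mul, if_neg, smul_zero]
    by_cases hpq : p = q
    · subst hpq; exact hA₁ p hp
    · exact (hA₂ p hp q hq hpq).2.1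
  have hN'N' : N' * N' = 0 := by
    rw [hN', Finset.sum_mul_sum]
    refine Finset.sum_eq_zero fun p hp => Finset.sum_eq_zero fun q hq => ?_
    rw [smul_mul_smul_comm, elemEnd_mul, if_neg, smul_zero]
    by_cases hpq : p = q
    · subst hpq; exact fun h => hA₁ p hp h.symm
    · exact (hA₂ p hp q hq hpq).2.2.1
  have hNN' : N * N' = ∑ p ∈ 𝒜, (a p * (a p * gv p.2 / gv p.1)) • elemEnd p.2 p.2 := by
    rw [hN, hN', Finset.sum_mul_sum]
    refine Finset.sum_congr rfl fun p hp => ?_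
    rw [Finset.sum_eq_single_of_mem p hp (fun q hq hqp => ?_)]
    · rw [smul_mul_smul_comm, elemEnd_mul, if_pos rfl]
    · rw [smul_mul_smul_comm, elemEnd_mul,
        if_neg (hA₂ p hp q hq (fun h => hqp h.symm)).1, smul_zero]
  have hN'N : N' * N = ∑ p ∈ 𝒜, ((a p * gv p.2 / gv p.1) * a p) • elemEnd p.1 p.1 := by
    rw [hN, hN', Finset.sum_mul_sum]
    refine Finset.sum_congr rfl fun p hp => ?_
    rw [Finset.sum_eq_single_of_mem p hp (fun q hq hqp => ?_)]
    · rw [smul_mul_smul_comm, elemEnd_mul, if_pos rfl]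
    · rw [smul_mul_smul_comm, elemEnd_mul,
        if_neg (hA₂ p hp q hq (fun h => hqp h.symm)).2.2.2, smul_zero]
  -- traces
  have htrLL : LinearMap.trace ℝ (Fin n → ℝ) (L * L) = ∑ i, lam i * lam i := by
    rw [hLL, map_sum]
    simp [trace_elemEnd]
  have htrLN : LinearMap.trace ℝ (Fin n → ℝ) (L * N) = 0 := by
    rw [hLN, map_sum]
    refine Finset.sum_eq_zero fun p hp => ?_
    rw [map_smul, trace_elemEnd, if_neg (hA₁ p hp), smul_zero]
  have htrNL : LinearMap.trace ℝ (Fin n → ℝ) (N * L) = 0 := by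
    rw [hNL, map_sum]
    refine Finset.sum_eq_zero fun p hp => ?_
    rw [map_smul, trace_elemEnd, if_neg (hA₁ p hp), smul_zero]
  have htrLN' : LinearMap.trace ℝ (Fin n → ℝ) (L * N') = 0 := by
    rw [hLN', map_sum]
    refine Finset.sum_eq_zero fun p hp => ?_
    rw [map_smul, trace_elemEnd, if_neg (fun h => hA₁ p hp h.symm), smul_zero]
  have htrN'L : LinearMap.trace ℝ (Fin n → ℝ) (N' * L) = 0 := by
    rw [hN'L, map_sum]
    refine Finset.sum_eq_zero fun p hp => ?_
    rw [map_smul, trace_elemEnd, if_neg (fun h => hA₁ p hp h.symm), smul_zero]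
  have htrNN' : LinearMap.trace ℝ (Fin n → ℝ) (N * N')
      = ∑ p ∈ 𝒜, a p * (a p * gv p.2 / gv p.1) := by
    rw [hNN', map_sum]
    refine Finset.sum_congr rfl fun p hp => ?_
    rw [map_smul, trace_elemEnd, if_pos rfl, smul_eq_mul, mul_one]
  have htrN'N : LinearMap.trace ℝ (Fin n → ℝ) (N' * N)
      = ∑ p ∈ 𝒜, (a p * gv p.2 / gv p.1) * a p := by
    rw [hN'N, map_sum]
    refine Finset.sum_congr rfl fun p hp => ?_
    rw [map_smul, trace_elemEnd, if_pos rfl, smul_eq_mul, mul_one]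
  -- trace D² = T
  have hTsum : T = ∑ i, lam i * lam i := by
    rw [htr, pow_two, hD]
    have e : (L + N) * (L + N) = L*L + L*N + N*L + N*N := by noncomm_ring
    rw [e, map_add, map_add, map_add, htrLL, htrLN, htrNL, hNN, map_zero, add_zero, add_zero,
      add_zero]
  -- the commutator
  have hC1 : L * N' - N' * L = T • N' := by
    rw [hLN', hN'L, hN', Finset.smul_sum, ← Finset.sum_sub_distrib]
    refine Finset.sum_congr rfl fun p hp => ?_
    match_scalars
    linear_combination (a p * gv p.2 / gv p.1) * (hlam p hp)
  have hC2 : N * L - L * N = T • N := by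
    rw [hNL, hLN, hN, Finset.smul_sum, ← Finset.sum_sub_distrib]
    refine Finset.sum_congr rfl fun p hp => ?_
    match_scalars
    linear_combination (a p) * (hlam p hp)
  have hcomm : D * Dstar - Dstar * D
      = T • N + T • N' + ((∑ p ∈ 𝒜, (a p * (a p * gv p.2 / gv p.1)) • elemEnd p.2 p.2)
        - ∑ p ∈ 𝒜, ((a p * gv p.2 / gv p.1) * a p) • elemEnd p.1 p.1) := by
    have e : D * Dstar - Dstar * D
        = (L * N' - N' * L) + (N * L - L * N) + (N * N' - N' * N) := by
      rw [hD, hDst]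
      noncomm_ring
    rw [e, hC1, hC2, hNN', hN'N]
    abel
  -- the A-coefficients
  have hAc : ∀ p ∈ 𝒜, a p * (a p * gv p.2 / gv p.1) = 2 * T * A p := by
    intro p hp
    rw [hA p hp]
    field_simp [hg p.1, htr0]
  -- trace of Ds²
  have htrDs : LinearMap.trace ℝ (Fin n → ℝ) (Ds ^ 2) = T + T * ∑ p ∈ 𝒜, A p := by
    have hS : ∑ p ∈ 𝒜, a p * (a p * gv p.2 / gv p.1) = 2 * T * ∑ p ∈ 𝒜, A p := by
      rw [Finset.mul_sum]
      exact Finset.sum_congr rfl hAc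
    have h1 : LinearMap.trace ℝ (Fin n → ℝ) (D * D) = T := by
      rw [← pow_two, ← htr]
    have h2 : LinearMap.trace ℝ (Fin n → ℝ) (D * Dstar) = T + 2 * T * ∑ p ∈ 𝒜, A p := by
      have e : D * Dstar = L*L + L*N' + N*L + N*N' := by
        rw [hD, hDst]; noncomm_ring
      rw [e, map_add, map_add, map_add, htrLL, htrLN', htrNL, htrNN', hS, ← hTsum]
      ring
    have h3 : LinearMap.trace ℝ (Fin n → ℝ) (Dstar * D) = T + 2 * T * ∑ p ∈ 𝒜, A p := by
      have e : Dstar * D = L*L + L*N + N'*L + N'*N := by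
        rw [hD, hDst]; noncomm_ring
      rw [e, map_add, map_add, map_add, htrLL, htrLN, htrN'L, htrN'N, ← hTsum]
      have hS' : ∑ p ∈ 𝒜, (a p * gv p.2 / gv p.1) * a p = 2 * T * ∑ p ∈ 𝒜, A p := by
        rw [← hS]
        exact Finset.sum_congr rfl fun p _ => mul_comm _ _
      rw [hS']
      ring
    have h4 : LinearMap.trace ℝ (Fin n → ℝ) (Dstar * Dstar) = T := by
      have e : Dstar * Dstar = L*L + L*N' + N'*L + N'*N' := by
        rw [hDst]; noncomm_ring
      rw [e, map_add, map_add, map_add, htrLL, htrLN', htrN'L, hN'N', map_zero, ← hTsum]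
      ring
    rw [pow_two, hDs, smul_mul_smul_comm]
    have e : (D + Dstar) * (D + Dstar) = D*D + D*Dstar + Dstar*D + Dstar*Dstar := by
      noncomm_ring
    rw [e, map_smul, map_add, map_add, map_add, h1, h2, h3, h4, smul_eq_mul]
    ring
  -- final assembly
  have hX2 : ∑ p ∈ 𝒜, (a p * (a p * gv p.2 / gv p.1)) • elemEnd p.2 p.2
      = (2*T) • ∑ p ∈ 𝒜, A p • elemEnd p.2 p.2 := by
    rw [Finset.smul_sum]
    refine Finset.sum_congr rfl fun p hp => ?_
    rw [smul_smul, hAc p hp]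
  have hX1 : ∑ p ∈ 𝒜, ((a p * gv p.2 / gv p.1) * a p) • elemEnd p.1 p.1
      = (2*T) • ∑ p ∈ 𝒜, A p • elemEnd p.1 p.1 := by
    rw [Finset.smul_sum]
    refine Finset.sum_congr rfl fun p hp => ?_
    rw [smul_smul]
    congr 1
    rw [← hAc p hp]
    ring
  have hX : ∑ p ∈ 𝒜, A p • (elemEnd p.2 p.2 - elemEnd p.1 p.1)
      = (∑ p ∈ 𝒜, A p • elemEnd p.2 p.2) - ∑ p ∈ 𝒜, A p • elemEnd p.1 p.1 := by
    rw [← Finset.sum_sub_distrib]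
    exact Finset.sum_congr rfl fun p _ => smul_sub _ _ _
  clear_value T L N N'
  rw [htrDs]
  rw [hcomm]
  rw [hX2]
  rw [hX1]
  rw [hX]
  rw [hDs]
  rw [hD]
  rw [hDst]
  module
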